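/- For distinct points (1,ζ) and (1,ζ') in the universal cover of the punctured plane with |ζ - ζ'| ≥ 4, the distance between them is at least 1. -/

import Mathlib

/-- Length of a (C¹) path `γ(t) = (r(t), ζ(t))`, `t ∈ [0,1]`, for the Riemannian
metric `dr² + r² dζ²` on the universal cover of the punctured plane. -/
noncomputable def pathLength (γ : ℝ → ℝ × ℝ) : ℝ :=
  ∫ t in (0:ℝ)..1, Real.sqrt ((deriv (fun s => (γ s).1) t) ^ 2 +
    ((γ t).1) ^ 2 * (deriv (fun s => (γ s).2) t) ^ 2)

/-- The induced length distance on `M = (0,∞) × ℝ`: the infimum of lengths of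
C¹ paths joining the two points and staying in the region `r > 0`. -/
noncomputable def coverDist (x y : ℝ × ℝ) : ℝ :=
  sInf {L : ℝ | ∃ γ : ℝ → ℝ × ℝ, ContDiff ℝ 1 γ ∧
    (∀ t ∈ Set.Icc (0:ℝ) 1, 0 < (γ t).1) ∧ γ 0 = x ∧ γ 1 = y ∧ L = pathLength γ}

lemma abs_sub_le_int_abs_deriv (f : ℝ → ℝ) (hf : ContDiff ℝ 1 f) {a b : ℝ} (hab : a ≤ b) :
    |f b - f a| ≤ ∫ t in a..b, |deriv f t| := by
  have hd : Continuous (deriv f) := hf.continuous_deriv le_rfl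
  have h1 : ∫ t in a..b, deriv f t = f b - f a :=
    intervalIntegral.integral_deriv_eq_sub
      (fun x _ => (hf.differentiable one_ne_zero).differentiableAt)
      (hd.intervalIntegrable a b)
  rw [← h1]
  exact intervalIntegral.abs_integral_le_integral_abs hab

lemma length_lower (γ : ℝ → ℝ × ℝ) (hγ : ContDiff ℝ 1 γ)
    (hr : ∀ t ∈ Set.Icc (0:ℝ) 1, 0 < (γ t).1)
    (ζ ζ' : ℝ) (h0 : γ 0 = (1, ζ)) (h1 : γ 1 = (1, ζ'))
    (h : |ζ - ζ'| ≥ 4) : 1 ≤ pathLength γ := by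
  set f : ℝ → ℝ := fun s => (γ s).1 with hfdef
  set g : ℝ → ℝ := fun s => (γ s).2 with hgdef
  have hfc : ContDiff ℝ 1 f := contDiff_fst.comp hγ
  have hgc : ContDiff ℝ 1 g := contDiff_snd.comp hγ
  have hf' : Continuous (deriv f) := hfc.continuous_deriv le_rfl
  have hg' : Continuous (deriv g) := hgc.continuous_deriv le_rfl
  have hHc : Continuous (fun t => Real.sqrt ((deriv f t) ^ 2 + (f t) ^ 2 * (deriv g t) ^ 2)) := by
    apply Real.continuous_sqrt.comp
    exact ((hf'.pow 2).add (((hfc.continuous.pow 2)).mul (hg'.pow 2)))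
  have hHint : IntervalIntegrable
      (fun t => Real.sqrt ((deriv f t) ^ 2 + (f t) ^ 2 * (deriv g t) ^ 2))
      MeasureTheory.volume 0 1 := hHc.intervalIntegrable 0 1
  have hf0 : f 0 = 1 := by simp [hfdef, h0]
  have hf1 : f 1 = 1 := by simp [hfdef, h1]
  have hPL : pathLength γ = ∫ t in (0:ℝ)..1,
      Real.sqrt ((deriv f t) ^ 2 + (f t) ^ 2 * (deriv g t) ^ 2) := rfl
  by_cases hc : ∀ t ∈ Set.Icc (0:ℝ) 1, (1:ℝ)/2 ≤ f t
  · -- stays in r ≥ 1/2; angular cost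
    have key : ∀ t ∈ Set.Icc (0:ℝ) 1,
        (1/2) * |deriv g t| ≤ Real.sqrt ((deriv f t) ^ 2 + (f t) ^ 2 * (deriv g t) ^ 2) := by
      intro t ht
      have h1 : (1/2) * |deriv g t| ≤ f t * |deriv g t| :=
        mul_le_mul_of_nonneg_right (hc t ht) (abs_nonneg _)
      have hft : 0 < f t := hr t ht
      have h2 : f t * |deriv g t| = Real.sqrt ((f t) ^ 2 * (deriv g t) ^ 2) := by
        have : (f t) ^ 2 * (deriv g t) ^ 2 = (f t * |deriv g t|) ^ 2 := by
          rw [mul_pow, sq_abs]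
        rw [this, Real.sqrt_sq (by positivity)]
      have h3 : Real.sqrt ((f t) ^ 2 * (deriv g t) ^ 2) ≤
          Real.sqrt ((deriv f t) ^ 2 + (f t) ^ 2 * (deriv g t) ^ 2) :=
        Real.sqrt_le_sqrt (le_add_of_nonneg_left (by positivity))
      linarith
    have step1 : ∫ t in (0:ℝ)..1, (1/2) * |deriv g t| ≤ pathLength γ := by
      rw [hPL]
      apply intervalIntegral.integral_mono_on (by norm_num)
        ((continuous_const.mul hg'.abs).intervalIntegrable 0 1) hHint key
    have step2 : (2:ℝ) ≤ ∫ t in (0:ℝ)..1, (1/2) * |deriv g t| := by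
      rw [intervalIntegral.integral_const_mul]
      have h3 : |g 1 - g 0| ≤ ∫ t in (0:ℝ)..1, |deriv g t| :=
        abs_sub_le_int_abs_deriv g hgc (by norm_num)
      have h4 : g 0 = ζ := by simp [hgdef, h0]
      have h5 : g 1 = ζ' := by simp [hgdef, h1]
      have h6 : (4:ℝ) ≤ |g 1 - g 0| := by
        rw [h4, h5, abs_sub_comm]; exact h
      linarith
    linarith
  · -- dips below 1/2; radial cost
    push_neg at hc
    obtain ⟨t₀, ht₀, hft₀⟩ := hc
    have hkey : ∀ t, |deriv f t| ≤ Real.sqrt ((deriv f t) ^ 2 + (f t) ^ 2 * (deriv g t) ^ 2) := by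
      intro t
      rw [← Real.sqrt_sq_eq_abs]
      exact Real.sqrt_le_sqrt (le_add_of_nonneg_right (by positivity))
    have piece : ∀ a b : ℝ, a ≤ b →
        |f b - f a| ≤ ∫ t in a..b,
          Real.sqrt ((deriv f t) ^ 2 + (f t) ^ 2 * (deriv g t) ^ 2) := by
      intro a b hab
      refine le_trans (abs_sub_le_int_abs_deriv f hfc hab) ?_
      apply intervalIntegral.integral_mono_on hab
        (hf'.abs.intervalIntegrable a b) (hHc.intervalIntegrable a b)
      intro t _; exact hkey t
    have hsplit : pathLength γ =
        (∫ t in (0:ℝ)..t₀, Real.sqrt ((deriv f t) ^ 2 + (f t) ^ 2 * (deriv g t) ^ 2)) +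
        ∫ t in t₀..(1:ℝ), Real.sqrt ((deriv f t) ^ 2 + (f t) ^ 2 * (deriv g t) ^ 2) := by
      rw [hPL, ← intervalIntegral.integral_add_adjacent_intervals
        (hHc.intervalIntegrable 0 t₀) (hHc.intervalIntegrable t₀ 1)]
    have p1 := piece 0 t₀ ht₀.1
    have p2 := piece t₀ 1 ht₀.2
    have e1 : |f t₀ - f 0| = 1 - f t₀ := by
      rw [hf0, abs_sub_comm, abs_of_nonneg (by linarith)]
    have e2 : |f 1 - f t₀| = 1 - f t₀ := by
      rw [hf1, abs_of_nonneg (by linarith)]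
    rw [hsplit]
    rw [e1] at p1; rw [e2] at p2
    linarith

theorem coverDist_ge_one_of_angle_far (ζ ζ' : ℝ) (h : |ζ - ζ'| ≥ 4) :
    coverDist (1, ζ) (1, ζ') ≥ 1 := by
  apply le_csInf
  · refine ⟨pathLength (fun t => (1, ζ + t * (ζ' - ζ))),
      fun t => (1, ζ + t * (ζ' - ζ)), ?_, ?_, ?_, ?_, rfl⟩
    · exact contDiff_const.prodMk (contDiff_const.add (contDiff_id.mul contDiff_const))
    · intro t _; norm_num
    · simp
    · simp
  · rintro L ⟨γ, hγ, hr, h0, h1, rfl⟩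
    exact length_lower γ hγ hr ζ ζ' h0 h1 h
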